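/- If f is a Hurwitz stable real polynomial of degree n with positive coefficients, then for every positive integer k there exists a polynomial p with positive coefficients and degree at most k−1 such that the polynomial s ↦ p(s) + s^k f(s) is Hurwitz stable. -/

import Mathlib

/-- A real polynomial is Hurwitz stable if all its complex zeros have negative real parts. -/
def HurwitzStable (f : Polynomial ℝ) : Prop :=
  ∀ z : ℂ, Polynomial.aeval z f = 0 → z.re < 0

open Polynomial Filter Metric

lemma step_lemma (f : Polynomial ℝ) (h0 : 0 < f.coeff 0) (hf : HurwitzStable f) :
    ∃ ε : ℝ, 0 < ε ∧ HurwitzStable (Polynomial.C ε + Polynomial.X * f) := by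
  set c : ℝ := f.coeff 0 with hc
  set fc : Polynomial ℂ := f.map (algebraMap ℝ ℂ) with hfc
  have haeval : ∀ z : ℂ, Polynomial.aeval z f = fc.eval z := by
    intro z; rw [aeval_def, eval_map]
  have hroot : ∀ z : ℂ, fc.eval z = 0 → z.re < 0 := by
    intro z hz; exact hf z (by rw [haeval]; exact hz)
  have hfc0 : fc.coeff 0 = (c : ℂ) := by simp [hfc, coeff_map, hc]
  have hfceval0 : fc.eval 0 = (c : ℂ) := by
    rw [← coeff_zero_eq_eval_zero, hfc0]
  have hfcne : fc ≠ 0 := by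
    intro h; rw [h] at hfceval0; simp at hfceval0
    have : c = 0 := by exact_mod_cast hfceval0.symm
    linarith
  -- δ such that on closed ball δ, ‖fc z‖ ≥ c/2
  have hcont : Continuous fun z : ℂ => fc.eval z := fc.continuous
  have hev : ∀ᶠ z in nhds (0:ℂ), c/2 < ‖fc.eval z‖ := by
    have : ContinuousAt (fun z : ℂ => ‖fc.eval z‖) 0 := hcont.norm.continuousAt
    have h2 : c/2 < ‖fc.eval 0‖ := by
      rw [hfceval0, Complex.norm_real, Real.norm_eq_abs, abs_of_pos h0]; linarith
    exact this.eventually (eventually_gt_nhds h2)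
  obtain ⟨δ', hδ'pos, hδ'⟩ := Metric.eventually_nhds_iff.mp hev
  set δ : ℝ := δ'/2 with hδdef
  have hδpos : 0 < δ := by positivity
  have hδ : ∀ z : ℂ, ‖z‖ ≤ δ → c/2 ≤ ‖fc.eval z‖ := by
    intro z hz
    have : dist z 0 < δ' := by
      rw [dist_zero_right]; linarith
    exact le_of_lt (hδ' this)
  -- bound M for divX on closed ball
  set g : Polynomial ℂ := fc.divX with hg
  have hgfc : g * X + Polynomial.C (c:ℂ) = fc := by
    rw [hg, ← hfc0]; exact divX_mul_X_add fc
  obtain ⟨M0, hM0⟩ := (isCompact_closedBall (0:ℂ) δ).exists_bound_of_continuousOn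
    (g.continuous.continuousOn)
  set M : ℝ := max M0 1 with hM
  have hMpos : (0:ℝ) < M := lt_of_lt_of_le one_pos (le_max_right _ _)
  have hMg : ∀ z : ℂ, ‖z‖ ≤ δ → ‖g.eval z‖ ≤ M := by
    intro z hz
    exact le_trans (hM0 z (by simpa [Metric.mem_closedBall, dist_zero_right] using hz))
      (le_max_left _ _)
  -- R such that ‖z‖ > R implies ‖z * fc z‖ ≥ 1
  have hdeg : 0 < (X * fc).degree := by
    rw [degree_mul, degree_X]
    have h2 := zero_le_degree_iff.mpr hfcne
    calc (0:WithBot ℕ) < 1 := by norm_num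
    _ ≤ 1 + fc.degree := le_add_of_nonneg_right h2
  have htend : Tendsto (fun z : ℂ => ‖(X * fc).eval z‖) (Bornology.cobounded ℂ) atTop :=
    (X * fc).tendsto_norm_atTop hdeg tendsto_norm_cobounded_atTop
  have hevR : ∀ᶠ z : ℂ in Bornology.cobounded ℂ, 1 ≤ ‖(X * fc).eval z‖ :=
    htend.eventually_ge_atTop 1
  obtain ⟨R, -, hR⟩ := (Metric.hasBasis_cobounded_compl_closedBall (0:ℂ)).eventually_iff.mp hevR
  have hRbig : ∀ z : ℂ, R < ‖z‖ → 1 ≤ ‖(X * fc).eval z‖ := by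
    intro z hz
    apply hR
    simp only [Set.mem_compl_iff, Metric.mem_closedBall, dist_zero_right, not_le]
    exact hz
  -- compact region
  set K : Set ℂ := {z : ℂ | δ ≤ ‖z‖ ∧ ‖z‖ ≤ R ∧ 0 ≤ z.re} with hK
  have hKclosed : IsClosed K := by
    apply IsClosed.inter
    · exact isClosed_le continuous_const continuous_norm
    apply IsClosed.inter
    · exact isClosed_le continuous_norm continuous_const
    · exact isClosed_le continuous_const Complex.continuous_re
  have hKcompact : IsCompact K := by
    apply (isCompact_closedBall (0:ℂ) R).of_isClosed_subset hKclosed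
    intro z hz
    simp only [Metric.mem_closedBall, dist_zero_right]
    exact hz.2.1
  have hKpos : ∀ z ∈ K, 0 < ‖(X * fc).eval z‖ := by
    intro z hz
    rw [norm_pos_iff]
    simp only [eval_mul, eval_X]
    apply mul_ne_zero
    · intro h
      have h1 := hz.1
      rw [h] at h1; simp at h1; linarith
    · intro h
      exact absurd (hroot z h) (not_lt.mpr hz.2.2)
  have hm : ∃ m : ℝ, 0 < m ∧ ∀ z ∈ K, m ≤ ‖(X * fc).eval z‖ := by
    rcases Set.eq_empty_or_nonempty K with hKe | hKne
    · exact ⟨1, one_pos, by simp [hKe]⟩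
    · obtain ⟨z₀, hz₀K, hz₀⟩ := hKcompact.exists_isMinOn hKne
        ((X * fc).continuous.norm.continuousOn)
      exact ⟨‖(X * fc).eval z₀‖, hKpos z₀ hz₀K, fun z hz => hz₀ hz⟩
  obtain ⟨m, hmpos, hmK⟩ := hm
  -- choose ε
  set ε : ℝ := min (min (c^2/(8*M)) (m/2)) (1/2) with hε
  have hεpos : 0 < ε := by
    apply lt_min (lt_min (by positivity) (by positivity)) (by norm_num)
  refine ⟨ε, hεpos, ?_⟩
  intro z hz
  by_contra hre
  push_neg at hre
  -- the root equation
  have heq : (ε:ℂ) + z * fc.eval z = 0 := by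
    have := hz
    rw [map_add, map_mul, aeval_C, aeval_X, haeval] at this
    simpa [Algebra.algebraMap_eq_smul_one] using this
  have heval : (X * fc).eval z = -(ε:ℂ) := by
    rw [eval_mul, eval_X]; linear_combination heq
  have hnorm : ‖z * fc.eval z‖ = ε := by
    have : z * fc.eval z = -(ε:ℂ) := by linear_combination heq
    rw [this, norm_neg, Complex.norm_real, Real.norm_eq_abs, abs_of_pos hεpos]
  rcases le_or_gt ‖z‖ δ with hzδ | hzδ
  · -- small z case
    have hfz : c/2 ≤ ‖fc.eval z‖ := hδ z hzδ
    have hzsmall : ‖z‖ * c ≤ 2 * ε := by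
      rw [norm_mul] at hnorm
      nlinarith [norm_nonneg z]
    -- real part computation
    have hfcz : fc.eval z = g.eval z * z + (c:ℂ) := by
      rw [← hgfc]; simp
    have heq2 : (ε:ℂ) + z^2 * g.eval z + (c:ℂ) * z = 0 := by
      rw [hfcz] at heq; linear_combination heq
    have hre2 : ε + (z^2 * g.eval z).re + c * z.re = 0 := by
      have := congrArg Complex.re heq2
      simpa using this
    have habs : |(z^2 * g.eval z).re| ≤ ‖z‖^2 * M := by
      calc |(z^2 * g.eval z).re| ≤ ‖z^2 * g.eval z‖ := Complex.abs_re_le_norm _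
      _ = ‖z‖^2 * ‖g.eval z‖ := by rw [norm_mul, norm_pow]
      _ ≤ ‖z‖^2 * M := by
          apply mul_le_mul_of_nonneg_left (hMg z hzδ) (by positivity)
    have hεle : ε ≤ c^2/(8*M) := le_trans (min_le_left _ _) (min_le_left _ _)
    have h1 : (z^2 * g.eval z).re ≥ -(‖z‖^2 * M) := neg_le_of_abs_le habs
    have h5 : ε ≤ ‖z‖^2 * M := by nlinarith [mul_nonneg h0.le hre]
    have hsq' : ‖z‖^2 * c^2 ≤ 4 * ε^2 := by nlinarith [norm_nonneg z, mul_nonneg (norm_nonneg z) h0.le]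
    have h2 : ε * (8*M) ≤ c^2 := by
      rw [← le_div_iff₀ (by positivity)]; exact hεle
    have hA : ε * c^2 ≤ (‖z‖^2*M) * c^2 := mul_le_mul_of_nonneg_right h5 (by positivity)
    have hB : (‖z‖^2 * c^2) * M ≤ (4*ε^2) * M := mul_le_mul_of_nonneg_right hsq' hMpos.le
    have hC : (ε * (8*M)) * (ε/2) ≤ c^2 * (ε/2) := mul_le_mul_of_nonneg_right h2 (by positivity)
    nlinarith [hA, hB, hC, mul_pos hεpos (mul_pos h0 h0)]
  · rcases le_or_gt ‖z‖ R with hzR | hzR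
    · have hzK : z ∈ K := ⟨le_of_lt hzδ, hzR, hre⟩
      have := hmK z hzK
      rw [eval_mul, eval_X, hnorm] at this
      have hεle : ε ≤ m/2 := le_trans (min_le_left _ _) (min_le_right _ _)
      linarith
    · have := hRbig z hzR
      rw [eval_mul, eval_X, hnorm] at this
      have hεle : ε ≤ 1/2 := min_le_right _ _
      linarith

lemma main_aux (f : Polynomial ℝ) (h0 : 0 < f.coeff 0) (hf : HurwitzStable f) :
    ∀ k : ℕ, 1 ≤ k → ∃ p : ℕ → ℝ, (∀ i < k, 0 < p i) ∧
      HurwitzStable ((∑ i ∈ Finset.range k, Polynomial.C (p i) * Polynomial.X ^ i) +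
        Polynomial.X ^ k * f) := by
  intro k hk
  induction k, hk using Nat.le_induction with
  | base =>
    obtain ⟨ε, hεpos, hε⟩ := step_lemma f h0 hf
    refine ⟨fun _ => ε, fun i _ => hεpos, ?_⟩
    have : (∑ i ∈ Finset.range 1, Polynomial.C ((fun _ => ε) i) * Polynomial.X ^ i) +
        Polynomial.X ^ 1 * f = Polynomial.C ε + Polynomial.X * f := by
      simp
    rw [this]; exact hε
  | succ k hk ih =>
    obtain ⟨p, hp, hstab⟩ := ih
    set F : Polynomial ℝ := (∑ i ∈ Finset.range k, Polynomial.C (p i) * Polynomial.X ^ i) +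
        Polynomial.X ^ k * f with hF
    have hF0 : 0 < F.coeff 0 := by
      have h1 : F.coeff 0 = p 0 := by
        rw [hF, Polynomial.coeff_add, Polynomial.mul_coeff_zero,
          Polynomial.coeff_X_pow, Polynomial.finset_sum_coeff]
        have : ∀ i ∈ Finset.range k, (Polynomial.C (p i) * Polynomial.X ^ i).coeff 0
            = if i = 0 then p i else 0 := by
          intro i _
          rw [Polynomial.coeff_C_mul, Polynomial.coeff_X_pow]
          by_cases h : i = 0 <;> simp [h, eq_comm]
        rw [Finset.sum_congr rfl this, Finset.sum_ite_eq' (Finset.range k) 0 p]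
        have h2 : (0:ℕ) ∈ Finset.range k := Finset.mem_range.mpr hk
        have h3 : k ≠ 0 := by omega
        simp [h2, h3, Ne.symm h3]
      rw [h1]; exact hp 0 hk
    obtain ⟨ε, hεpos, hε⟩ := step_lemma F hF0 hstab
    refine ⟨fun i => if i = 0 then ε else p (i - 1), ?_, ?_⟩
    · intro i hi
      by_cases h : i = 0
      · simp [h, hεpos]
      · simp only [h, if_false]
        exact hp (i-1) (by omega)
    · have hformula : (∑ i ∈ Finset.range (k+1),
          Polynomial.C (if i = 0 then ε else p (i - 1)) * Polynomial.X ^ i) +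
          Polynomial.X ^ (k+1) * f = Polynomial.C ε + Polynomial.X * F := by
        rw [Finset.sum_range_succ']
        simp only [Nat.succ_ne_zero, if_false, Nat.add_sub_cancel, if_true, pow_zero, mul_one]
        rw [hF, mul_add, Finset.mul_sum]
        have : ∀ i ∈ Finset.range k, Polynomial.C (p i) * Polynomial.X ^ (i+1)
            = Polynomial.X * (Polynomial.C (p i) * Polynomial.X ^ i) := by
          intro i _; ring
        rw [Finset.sum_congr rfl this]
        ring
      rw [hformula]; exact hε

theorem stable_prefix_exists (n : ℕ) (hn : 1 ≤ n) (a : ℕ → ℝ) (ha : ∀ i ≤ n, 0 < a i)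
    (hf : HurwitzStable (∑ i ∈ Finset.range (n + 1), Polynomial.C (a i) * Polynomial.X ^ i)) :
    ∀ k : ℕ, 1 ≤ k → ∃ p : ℕ → ℝ,
      (∀ i ≤ k - 1, 0 < p i) ∧
      HurwitzStable ((∑ i ∈ Finset.range k, Polynomial.C (p i) * Polynomial.X ^ i) +
        Polynomial.X ^ k * (∑ i ∈ Finset.range (n + 1), Polynomial.C (a i) * Polynomial.X ^ i)) := by
  intro k hk
  set f : Polynomial ℝ := ∑ i ∈ Finset.range (n + 1), Polynomial.C (a i) * Polynomial.X ^ i with hfdef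
  have h0 : 0 < f.coeff 0 := by
    have h1 : f.coeff 0 = a 0 := by
      rw [hfdef, Polynomial.finset_sum_coeff]
      have : ∀ i ∈ Finset.range (n+1), (Polynomial.C (a i) * Polynomial.X ^ i).coeff 0
          = if i = 0 then a i else 0 := by
        intro i _
        rw [Polynomial.coeff_C_mul, Polynomial.coeff_X_pow]
        by_cases h : i = 0 <;> simp [h, eq_comm]
      rw [Finset.sum_congr rfl this, Finset.sum_ite_eq' (Finset.range (n+1)) 0 a]
      simp
    rw [h1]; exact ha 0 (Nat.zero_le n)
  obtain ⟨p, hp, hstab⟩ := main_aux f h0 hf k hk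
  exact ⟨p, fun i hi => hp i (by omega), hstab⟩
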